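/- Suppose f : ℤ × ℤ → ℂ satisfies, for all m, n, t ∈ ℤ, both (t + m)·f(m,t) − t·f(m, n+t) = m·f(m+n, t) and f(m, n+t)·f(n,t) = f(n, m+t)·f(m,t). Then either f(m,n) = f(0,0) for all m, n ∈ ℤ, or f(0,0) = 0 and there exists d ∈ ℂ with f(m,−m) = d·m for all m and f(m,n) = 0 whenever m + n ≠ 0. -/

import Mathlib

private lemma vanish_of_hf1 (f : ℤ × ℤ → ℂ)
    (hf1 : ∀ m n t : ℤ,
      (t + m) * f (m, t) - t * f (m, n + t) = m * f (m + n, t))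
    (h00 : f (0, 0) = 0) :
    ∀ a b : ℤ, a + b ≠ 0 → f (a, b) = 0 := by
  have h0 : ∀ t : ℤ, f (0, t) = 0 := by
    intro t
    rcases eq_or_ne t 0 with rfl | ht
    · exact h00
    · have h := hf1 0 (-t) t
      rw [show -t + t = (0 : ℤ) by ring] at h
      rw [h00] at h
      have ht' : (t : ℂ) ≠ 0 := Int.cast_ne_zero.mpr ht
      have h2 : (t : ℂ) * f (0, t) = 0 := by push_cast at h; linear_combination h
      exact (mul_eq_zero.mp h2).resolve_left ht'
  have hm0 : ∀ m : ℤ, f (m, 0) = 0 := by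
    intro m
    rcases eq_or_ne m 0 with rfl | hm
    · exact h00
    · have h := hf1 m (-m) 0
      rw [show m + -m = (0 : ℤ) by ring] at h
      rw [h00] at h
      have hm' : (m : ℂ) ≠ 0 := Int.cast_ne_zero.mpr hm
      have h2 : (m : ℂ) * f (m, 0) = 0 := by push_cast at h; linear_combination h
      exact (mul_eq_zero.mp h2).resolve_left hm'
  have hdiag : ∀ m : ℤ, f (m, m) = 0 := by
    intro m
    rcases eq_or_ne m 0 with rfl | hm
    · exact h00
    · have h := hf1 m (-m) m
      rw [show -m + m = (0 : ℤ) by ring, show m + -m = (0 : ℤ) by ring] at h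
      rw [hm0 m, h0 m] at h
      have hm' : (2 * (m : ℂ)) ≠ 0 := by
        have : (m : ℂ) ≠ 0 := Int.cast_ne_zero.mpr hm
        simp [this]
      have h2 : (2 * (m : ℂ)) * f (m, m) = 0 := by linear_combination h
      exact (mul_eq_zero.mp h2).resolve_left hm'
  have hA : ∀ m : ℤ, f (m, -(2 * m)) = 0 := by
    intro m
    rcases eq_or_ne m 0 with rfl | hm
    · simpa using h0 0
    · have h := hf1 m (-m) (-m)
      rw [show m + -m = (0 : ℤ) by ring, show -m + -m = -(2 * m) by ring] at h
      rw [h0 (-m)] at h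
      have hm' : (m : ℂ) ≠ 0 := Int.cast_ne_zero.mpr hm
      have h2 : (m : ℂ) * f (m, -(2 * m)) = 0 := by push_cast at h; linear_combination h
      exact (mul_eq_zero.mp h2).resolve_left hm'
  have hB : ∀ t : ℤ, f (-(2 * t), t) = 0 := by
    intro t
    rcases eq_or_ne t 0 with rfl | ht
    · simpa using hm0 0
    · have h := hf1 (-t) (-t) t
      rw [show -t + t = (0 : ℤ) by ring, show -t + -t = -(2 * t) by ring] at h
      rw [hm0 (-t)] at h
      have ht' : (t : ℂ) ≠ 0 := Int.cast_ne_zero.mpr ht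
      have h2 : (t : ℂ) * f (-(2 * t), t) = 0 := by push_cast at h; linear_combination h
      exact (mul_eq_zero.mp h2).resolve_left ht'
  have key : ∀ a b n : ℤ, a + b ≠ 0 → f (a, n + b) = 0 → f (a + n, b) = 0 →
      f (a, b) = 0 := by
    intro a b n hab hy hx
    have h := hf1 a n b
    rw [hy, hx] at h
    have hab' : ((b : ℂ) + a) ≠ 0 := by
      have : ((b + a : ℤ) : ℂ) ≠ 0 := Int.cast_ne_zero.mpr (by omega)
      push_cast at this; exact this
    have h2 : ((b : ℂ) + a) * f (a, b) = 0 := by linear_combination h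
    exact (mul_eq_zero.mp h2).resolve_left hab'
  have main : ∀ N : ℕ, ∀ a b : ℤ, a.natAbs + b.natAbs ≤ N → a + b ≠ 0 → f (a, b) = 0 := by
    intro N
    induction N with
    | zero => intro a b h hs; exfalso; omega
    | succ N ih =>
      intro a b hab hs
      rcases eq_or_ne a 0 with rfl | ha0
      · exact h0 b
      rcases eq_or_ne b 0 with rfl | hb0
      · exact hm0 a
      rcases eq_or_ne a b with rfl | hab'
      · exact hdiag a
      rcases lt_or_gt_of_ne ha0 with ha | ha
      · rcases lt_or_gt_of_ne hb0 with hb | hb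
        · -- a < 0, b < 0
          rcases lt_or_gt_of_ne hab' with hlt | hgt
          · -- a < b : move to (a - b, b)
            apply key a b (-b) hs
            · rw [show -b + b = (0 : ℤ) by ring]; exact hm0 a
            · exact ih (a + -b) b (by omega) (by omega)
          · -- b < a : move to (a, b - a)
            apply key a b (-a) hs
            · exact ih a (-a + b) (by omega) (by omega)
            · rw [show a + -a = (0 : ℤ) by ring]; exact h0 b
        · -- a < 0 < b
          rcases lt_or_gt_of_ne hs with hsneg | hspos
          · -- a + b < 0 : move to (-a-b, b), both positive
            apply key a b (-(2 * a) - b) hs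
            · rw [show -(2 * a) - b + b = -(2 * a) by ring]; exact hA a
            · exact ih (a + (-(2 * a) - b)) b (by omega) (by omega)
          · -- a + b > 0 : move to (a, -a-b), both negative
            apply key a b (-(2 * b) - a) hs
            · exact ih a (-(2 * b) - a + b) (by omega) (by omega)
            · rw [show a + (-(2 * b) - a) = -(2 * b) by ring]; exact hB b
      · rcases lt_or_gt_of_ne hb0 with hb | hb
        · -- b < 0 < a
          rcases lt_or_gt_of_ne hs with hsneg | hspos
          · -- a + b < 0 : move to (a, -a-b), both positive
            apply key a b (-(2 * b) - a) hs
            · exact ih a (-(2 * b) - a + b) (by omega) (by omega)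
            · rw [show a + (-(2 * b) - a) = -(2 * b) by ring]; exact hB b
          · -- a + b > 0 : move to (-a-b, b), both negative
            apply key a b (-(2 * a) - b) hs
            · rw [show -(2 * a) - b + b = -(2 * a) by ring]; exact hA a
            · exact ih (a + (-(2 * a) - b)) b (by omega) (by omega)
        · -- 0 < a, 0 < b
          rcases lt_or_gt_of_ne hab' with hlt | hgt
          · -- a < b : move to (a, b - a)
            apply key a b (-a) hs
            · exact ih a (-a + b) (by omega) (by omega)
            · rw [show a + -a = (0 : ℤ) by ring]; exact h0 b
          · -- b < a : move to (a - b, b)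
            apply key a b (-b) hs
            · rw [show -b + b = (0 : ℤ) by ring]; exact hm0 a
            · exact ih (a + -b) b (by omega) (by omega)
  intro a b hab
  exact main (a.natAbs + b.natAbs) a b le_rfl hab

/-- Case I.3.3 (`b = 0`, `a = 0`) of Theorem 3.5: either `f` is constant, or
`f(0,0) = 0`, `f(m,−m) = d m` for some `d`, and `f(m,n) = 0` for `m + n ≠ 0`. -/
theorem stmt_8 (f : ℤ × ℤ → ℂ)
    (hf1 : ∀ m n t : ℤ,
      (t + m) * f (m, t) - t * f (m, n + t) = m * f (m + n, t))
    (hf2 : ∀ m n t : ℤ, f (m, n + t) * f (n, t) = f (n, m + t) * f (m, t)) :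
    (∀ m n : ℤ, f (m, n) = f (0, 0)) ∨
    (f (0, 0) = 0 ∧ ∃ d : ℂ,
      (∀ m : ℤ, f (m, -m) = d * m) ∧
      (∀ m n : ℤ, m + n ≠ 0 → f (m, n) = 0)) := by
  have hvan : ∀ a b : ℤ, a + b ≠ 0 → f (a, b) = f (0, 0) := by
    intro a b hab
    have h := vanish_of_hf1 (fun p => f p - f (0, 0))
      (by intro m n t; linear_combination hf1 m n t)
      (by simp) a b hab
    linear_combination h
  have hdl : ∀ m : ℤ, f (m, -m) = f (0, 0) + m * (f (1, -1) - f (0, 0)) := by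
    intro m
    have h := hf1 1 (m - 1) (-m)
    rw [show m - 1 + -m = (-1 : ℤ) by ring, show 1 + (m - 1) = m by ring] at h
    rcases eq_or_ne m 1 with rfl | hm
    · push_cast at h ⊢
      linear_combination h
    · have h1 : f (1, -m) = f (0, 0) := hvan 1 (-m) (by omega)
      rw [h1] at h
      push_cast at h ⊢
      linear_combination -h
  by_cases hc : f (0, 0) = 0
  · right
    refine ⟨hc, f (1, -1), ?_, ?_⟩
    · intro m; rw [hdl m, hc]; ring
    · intro m n hmn; rw [hvan m n hmn, hc]
  · left
    have h2 := hf2 1 (-2) 1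
    rw [show (-2 : ℤ) + 1 = -1 by ring, show (1 : ℤ) + 1 = 2 by ring] at h2
    have e1 : f (-2, 1) = f (0, 0) := hvan _ _ (by norm_num)
    have e2 : f (1, 1) = f (0, 0) := hvan _ _ (by norm_num)
    have e3 : f (-2, 2) = f (0, 0) + (-2 : ℤ) * (f (1, -1) - f (0, 0)) := by
      have h := hdl (-2)
      rwa [show -(-2 : ℤ) = 2 by norm_num] at h
    rw [e1, e2, e3] at h2
    have hd0 : f (1, -1) = f (0, 0) := by
      have h3 : (3 : ℂ) * (f (1, -1) - f (0, 0)) * f (0, 0) = 0 := by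
        push_cast at h2
        linear_combination h2
      rcases mul_eq_zero.mp h3 with h | h
      · rcases mul_eq_zero.mp h with h | h
        · norm_num at h
        · exact sub_eq_zero.mp h
      · exact absurd h hc
    intro m n
    rcases eq_or_ne (m + n) 0 with h | h
    · have hn : n = -m := by omega
      subst hn
      rw [hdl m, hd0]; ring
    · exact hvan m n h
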